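/- arXiv:0904.0039 — 2 statements merged into one kernel-verified Lean document; each statement's English description precedes it below -/
import Mathlib

section
/- Let C be a stable curve of compact type of genus g ≥ 2. Then C has exactly one central component if and only if there is no separating node of C whose two attached tails both have genus g/2. -/
open Finset

/-- An abstract (combinatorial) model of a nodal curve: a finite set of irreducible
components `V` (with geometric genus `w v`), and a finite set of nodes `N`, each node
lying on the (unordered pair of) components recorded by `ends`. -/
structure NodalCurve where
  V : Type
  N : Type
  [instFV : Fintype V]
  [instDV : DecidableEq V]
  [instFN : Fintype N]
  [instDN : DecidableEq N]
  ends : N → Sym2 V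
  w : V → ℕ

namespace NodalCurve

variable (C : NodalCurve)

instance : Fintype C.V := C.instFV
instance : DecidableEq C.V := C.instDV
instance : Fintype C.N := C.instFN
instance : DecidableEq C.N := C.instDN

/-- The dual graph of the curve (as a simple graph on the components). -/
def graph : SimpleGraph C.V :=
  SimpleGraph.fromRel (fun u v => ∃ n, C.ends n = s(u, v))

/-- The number of branches (ends) of the node `n` lying on the subcurve `S`. -/
def endsIn (S : Finset C.V) (n : C.N) : ℕ :=
  Sym2.lift ⟨fun a b => (if a ∈ S then 1 else 0) + (if b ∈ S then 1 else 0),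
    fun _ _ => add_comm _ _⟩ (C.ends n)

/-- `k S = #(Y ∩ Y')`: the number of nodes where the subcurve `S` meets its complement. -/
def k (S : Finset C.V) : ℕ := (univ.filter fun n => C.endsIn S n = 1).card

/-- nodes both of whose branches lie on `S`. -/
def internalNodes (S : Finset C.V) : ℕ := (univ.filter fun n => C.endsIn S n = 2).card

/-- The (arithmetic) genus of the curve. -/
def genus : ℤ :=
  ∑ v, (C.w v : ℤ) + (Fintype.card C.N : ℤ) - (Fintype.card C.V : ℤ) + 1

/-- The genus `1 - χ(O_Y)` of a (connected) subcurve with components `S`. -/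
def genusSub (S : Finset C.V) : ℤ :=
  ∑ v ∈ S, (C.w v : ℤ) + (C.internalNodes S : ℤ) - (S.card : ℤ) + 1

/-- `χ(O_Y)` for the subcurve `Y` with components `S`. -/
def chiO (S : Finset C.V) : ℤ :=
  (S.card : ℤ) - ∑ v ∈ S, (C.w v : ℤ) - (C.internalNodes S : ℤ)

/-- The degree of `ω_C` restricted to the subcurve with components `S`. -/
def degω (S : Finset C.V) : ℤ :=
  ∑ v ∈ S, (2 * (C.w v : ℤ) - 2) + ∑ n, (C.endsIn S n : ℤ)

/-- Connectedness of the subcurve with components `S`. -/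
def connectedSub (S : Finset C.V) : Prop := (C.graph.induce (S : Set C.V)).Connected

/-- Connectedness of the curve. -/
def Conn : Prop := C.graph.Connected

/-- The curve is of compact type: every node is separating, i.e. the dual graph
(with its multiple edges and loops) is a tree. -/
def CompactType : Prop :=
  Function.Injective C.ends ∧ (∀ n, ¬ (C.ends n).IsDiag) ∧ C.graph.IsTree

/-- Deligne–Mumford stability. -/
def Stable : Prop := ∀ v, 0 < 2 * (C.w v : ℤ) - 2 + ∑ n, (C.endsIn {v} n : ℤ)

/-- A tail: a subcurve meeting its complement in exactly one node. -/
def isTail (S : Finset C.V) : Prop := C.k S = 1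

/-- The degree `d_Y` of a multidegree `e` on the subcurve with components `S`. -/
def degSub (e : C.V → ℤ) (S : Finset C.V) : ℤ := ∑ v ∈ S, e v

/-- The total degree of a multidegree. -/
def totalDeg (e : C.V → ℤ) : ℤ := ∑ v, e v

/-- Semistability (w.r.t. the canonical polarization) at the subcurve `S`:
`|d_Y - d·deg(ω_C|_Y)/(2g-2)| ≤ k_Y/2`. -/
def semistableAt (e : C.V → ℤ) (S : Finset C.V) : Prop :=
  |(C.degSub e S : ℚ) - (C.totalDeg e : ℚ) * (C.degω S : ℚ) / (2 * (C.genus : ℚ) - 2)|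
    ≤ (C.k S : ℚ) / 2

/-- The strict lower inequality of quasistability at the subcurve `S`:
`d_Y - d·deg(ω_C|_Y)/(2g-2) > -k_Y/2`. -/
def quasistableLowAt (e : C.V → ℤ) (S : Finset C.V) : Prop :=
  -((C.k S : ℚ) / 2) <
    (C.degSub e S : ℚ) - (C.totalDeg e : ℚ) * (C.degω S : ℚ) / (2 * (C.genus : ℚ) - 2)

/-- A semistable multidegree. -/
def semistable (e : C.V → ℤ) : Prop :=
  ∀ S : Finset C.V, S.Nonempty → S ≠ univ → C.semistableAt e S

/-- An `X`-quasistable multidegree. -/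
def Xquasistable (X : C.V) (e : C.V → ℤ) : Prop :=
  C.semistable e ∧
    ∀ S : Finset C.V, S.Nonempty → S ≠ univ → X ∈ S → C.quasistableLowAt e S

/-- A `d̄`-big tail: `d_Z·deg(ω_C) - d·deg(ω_C|_Z) < 2g_Z - g`. -/
def isBigTail (e : C.V → ℤ) (S : Finset C.V) : Prop :=
  C.isTail S ∧
    C.degSub e S * (2 * C.genus - 2) - C.totalDeg e * C.degω S
      < 2 * C.genusSub S - C.genus

/-- `S` is (the set of components of) a connected component of the complement `X'`
of the irreducible component `x`. -/
def complComponent (x : C.V) (S : Finset C.V) : Prop :=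
  x ∉ S ∧ S.Nonempty ∧ C.connectedSub S ∧
    ∀ u ∈ S, ∀ v : C.V, C.graph.Adj u v → v ≠ x → v ∈ S

/-- `T` is (the set of components of) a connected component of the subcurve `S`. -/
def subComponent (S T : Finset C.V) : Prop :=
  T ⊆ S ∧ T.Nonempty ∧ C.connectedSub T ∧
    ∀ u ∈ T, ∀ v ∈ S, C.graph.Adj u v → v ∈ T

/-- A central component: every connected component `Z` of `X'` has `g_Z < g/2`. -/
def central (x : C.V) : Prop :=
  ∀ S : Finset C.V, C.complComponent x S → 2 * C.genusSub S < C.genus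

/-- A semicentral component: every connected component `Z` of `X'` has `g_Z ≤ g/2`. -/
def semicentral (x : C.V) : Prop :=
  ∀ S : Finset C.V, C.complComponent x S → 2 * C.genusSub S ≤ C.genus

end NodalCurve
namespace NodalCurve

open SimpleGraph

variable (C : NodalCurve)

attribute [local instance] Classical.propDecidable

private lemma sym2_cases {α : Type*} (z : Sym2 α) : ∃ a b, z = s(a, b) :=
  Sym2.ind (fun a b => ⟨a, b, rfl⟩) z

lemma graph_adj {u v : C.V} : C.graph.Adj u v ↔ u ≠ v ∧ ∃ n, C.ends n = s(u, v) := by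
  rw [graph, SimpleGraph.fromRel_adj]
  constructor
  · rintro ⟨h, ⟨n, hn⟩ | ⟨n, hn⟩⟩
    · exact ⟨h, n, hn⟩
    · exact ⟨h, n, by rw [hn, Sym2.eq_swap]⟩
  · rintro ⟨h, n, hn⟩
    exact ⟨h, Or.inl ⟨n, hn⟩⟩

lemma endsIn_pair {S : Finset C.V} {n : C.N} {a b : C.V} (h : C.ends n = s(a, b)) :
    C.endsIn S n = (if a ∈ S then 1 else 0) + (if b ∈ S then 1 else 0) := by
  rw [endsIn, h, Sym2.lift_mk]

lemma adj_of_ends (hct : C.CompactType) {n : C.N} {a b : C.V} (h : C.ends n = s(a, b)) :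
    C.graph.Adj a b := by
  refine C.graph_adj.mpr ⟨?_, n, h⟩
  intro hab
  subst hab
  exact hct.2.1 n (by rw [h]; exact Sym2.mk_isDiag_iff.mpr rfl)

lemma endsIn_one_iff {S : Finset C.V} {n : C.N} {a b : C.V} (h : C.ends n = s(a, b)) :
    C.endsIn S n = 1 ↔ (a ∈ S ∧ b ∉ S) ∨ (a ∉ S ∧ b ∈ S) := by
  rw [C.endsIn_pair h]
  split_ifs with h1 h2 h2 <;> simp_all

lemma endsIn_two {S : Finset C.V} {n : C.N} {a b : C.V} (h : C.ends n = s(a, b))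
    (h2 : C.endsIn S n = 2) : a ∈ S ∧ b ∈ S := by
  rw [C.endsIn_pair h] at h2
  split_ifs at h2 <;> simp_all

lemma reachable_induce_of_walk {S : Finset C.V} :
    ∀ {u z : C.V} (w : C.graph.Walk u z), (∀ v ∈ w.support, v ∈ S) →
      ∀ (hu : u ∈ (S : Set C.V)) (hz : z ∈ (S : Set C.V)),
      (C.graph.induce (S : Set C.V)).Reachable ⟨u, hu⟩ ⟨z, hz⟩ := by
  intro u z w
  induction w with
  | nil => intro _ _ _; exact Reachable.refl _
  | @cons u b z h p ih =>
    intro hsup hu hz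
    have hb : b ∈ (S : Set C.V) :=
      hsup b (by rw [Walk.support_cons]; exact List.mem_cons_of_mem _ p.start_mem_support)
    have h1 : (C.graph.induce (S : Set C.V)).Adj ⟨u, hu⟩ ⟨b, hb⟩ := by
      simp only [comap_adj, Function.Embedding.coe_subtype]
      exact h
    exact h1.reachable.trans
      (ih (fun v hv => hsup v (by rw [Walk.support_cons]; exact List.mem_cons_of_mem _ hv)) hb hz)

lemma connectedSub_of_pivot {S : Finset C.V} {y : C.V} (hy : y ∈ S)
    (h : ∀ z ∈ S, ∃ w : C.graph.Walk y z, ∀ v ∈ w.support, v ∈ S) :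
    C.connectedSub S := by
  rw [connectedSub, connected_iff]
  refine ⟨?_, ⟨⟨y, hy⟩⟩⟩
  rintro ⟨a, ha⟩ ⟨b, hb⟩
  obtain ⟨wa, hwa⟩ := h a ha
  obtain ⟨wb, hwb⟩ := h b hb
  exact (C.reachable_induce_of_walk wa hwa hy ha).symm.trans
    (C.reachable_induce_of_walk wb hwb hy hb)

lemma exists_walk_of_connectedSub {S : Finset C.V} (h : C.connectedSub S) {u z : C.V}
    (hu : u ∈ S) (hz : z ∈ S) : ∃ w : C.graph.Walk u z, ∀ v ∈ w.support, v ∈ S := by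
  obtain ⟨p⟩ := h.preconnected ⟨u, hu⟩ ⟨z, hz⟩
  refine ⟨p.map (SimpleGraph.Embedding.induce (S : Set C.V)).toHom, ?_⟩
  intro v hv
  replace hv : v ∈ p.support.map (SimpleGraph.Embedding.induce (G := C.graph) (S : Set C.V)).toHom := by
    rw [← Walk.support_map]; exact hv
  obtain ⟨⟨v', hv'⟩, -, rfl⟩ := List.mem_map.1 hv
  exact hv'

/-- The set of vertices reachable from `u` by a walk avoiding `x`. -/
noncomputable def Rf (x u : C.V) : Finset C.V :=
  univ.filter fun z => ∃ w : C.graph.Walk u z, x ∉ w.support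

lemma mem_Rf {x u z : C.V} : z ∈ C.Rf x u ↔ ∃ w : C.graph.Walk u z, x ∉ w.support := by
  simp [Rf]

lemma mem_of_walk_avoid {x : C.V} {S : Finset C.V} (hS : C.complComponent x S) :
    ∀ {u z : C.V} (w : C.graph.Walk u z), u ∈ S → x ∉ w.support → z ∈ S := by
  intro u z w
  induction w with
  | nil => exact fun h _ => h
  | @cons u b z h p ih =>
    intro hu hx
    have hbx : b ≠ x := by
      rintro rfl
      exact hx (by rw [Walk.support_cons]; exact List.mem_cons_of_mem _ p.start_mem_support)
    have hb : b ∈ S := hS.2.2.2 u hu b h hbx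
    refine ih hb ?_
    intro hmem
    exact hx (by rw [Walk.support_cons]; exact List.mem_cons_of_mem _ hmem)

lemma complComponent_eq_Rf {x : C.V} {S : Finset C.V} (hS : C.complComponent x S) {u : C.V}
    (hu : u ∈ S) : S = C.Rf x u := by
  ext z
  rw [C.mem_Rf]
  constructor
  · intro hz
    obtain ⟨w, hw⟩ := C.exists_walk_of_connectedSub hS.2.2.1 hu hz
    exact ⟨w, fun hx => hS.1 (hw x hx)⟩
  · rintro ⟨w, hw⟩
    exact C.mem_of_walk_avoid hS w hu hw

lemma complComponent_Rf {x y : C.V} (hxy : C.graph.Adj x y) :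
    C.complComponent x (C.Rf x y) := by
  have hy : y ∈ C.Rf x y := C.mem_Rf.mpr ⟨Walk.nil, by
    rw [Walk.support_nil]; simpa using hxy.ne⟩
  refine ⟨?_, ⟨y, hy⟩, ?_, ?_⟩
  · intro hx
    obtain ⟨w, hw⟩ := C.mem_Rf.mp hx
    exact hw w.end_mem_support
  · refine C.connectedSub_of_pivot hy ?_
    intro z hz
    obtain ⟨w, hw⟩ := C.mem_Rf.mp hz
    refine ⟨w, fun v hv => ?_⟩
    exact C.mem_Rf.mpr ⟨w.takeUntil v hv, fun hx => hw (Walk.support_takeUntil_subset w hv hx)⟩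
  · intro u hu v huv hvx
    obtain ⟨w, hw⟩ := C.mem_Rf.mp hu
    refine C.mem_Rf.mpr ⟨w.concat huv, ?_⟩
    rw [Walk.support_concat]
    intro hx
    rcases List.mem_append.mp hx with h | h
    · exact hw h
    · rw [List.mem_singleton] at h
      exact hvx h.symm

lemma exists_complComponent (hconn : C.Conn) {x z : C.V} (hz : z ≠ x) :
    ∃ S, C.complComponent x S ∧ z ∈ S := by
  obtain ⟨w0⟩ := hconn.preconnected x z
  obtain ⟨w, hw⟩ := w0.toPath
  cases w with
  | nil => exact absurd rfl hz
  | cons h p =>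
    refine ⟨C.Rf x _, C.complComponent_Rf h, C.mem_Rf.mpr ⟨p, ?_⟩⟩
    exact ((Walk.cons_isPath_iff h p).mp hw).2

lemma exists_boundary {S : Finset C.V} :
    ∀ {u z : C.V} (w : C.graph.Walk u z), u ∈ S → z ∉ S →
      ∃ a b, a ∈ S ∧ b ∉ S ∧ C.graph.Adj a b := by
  intro u z w
  induction w with
  | nil => intro hu hz; exact absurd hu hz
  | @cons u b z h p ih =>
    intro hu hz
    by_cases hb : b ∈ S
    · exact ih hb hz
    · exact ⟨u, b, hu, hb, h⟩

lemma crossing_iff (hct : C.CompactType) {x : C.V} {S : Finset C.V}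
    (hS : C.complComponent x S) {n : C.N} :
    C.endsIn S n = 1 ↔ ∃ a, a ∈ S ∧ C.ends n = s(a, x) := by
  constructor
  · intro h1
    obtain ⟨a, b, hab⟩ := sym2_cases (C.ends n)
    rcases (C.endsIn_one_iff hab).mp h1 with ⟨ha, hb⟩ | ⟨ha, hb⟩
    · have hadj := C.adj_of_ends hct hab
      have hbx : b = x := by
        by_contra hbx
        exact hb (hS.2.2.2 a ha b hadj hbx)
      exact ⟨a, ha, by rw [hab, hbx]⟩
    · have hadj := (C.adj_of_ends hct hab).symm
      have hax : a = x := by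
        by_contra hax
        exact ha (hS.2.2.2 b hb a hadj hax)
      exact ⟨b, hb, by rw [hab, hax, Sym2.eq_swap]⟩
  · rintro ⟨a, ha, hn⟩
    rw [C.endsIn_one_iff hn]
    exact Or.inl ⟨ha, hS.1⟩

lemma crossing_exists (hconn : C.Conn) (hct : C.CompactType) {x : C.V} {S : Finset C.V}
    (hS : C.complComponent x S) : ∃ n a, a ∈ S ∧ C.ends n = s(a, x) := by
  obtain ⟨u, hu⟩ := hS.2.1
  obtain ⟨w⟩ := hconn.preconnected u x
  obtain ⟨a, b, ha, hb, hadj⟩ := C.exists_boundary w hu hS.1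
  have hbx : b = x := by
    by_contra h
    exact hb (hS.2.2.2 a ha b hadj h)
  obtain ⟨-, m, hm⟩ := C.graph_adj.mp hadj
  rw [hbx] at hm
  exact ⟨m, a, ha, hm⟩

lemma no_two_paths (hct : C.CompactType) {x y z : C.V} (hxy : C.graph.Adj x y)
    {q : C.graph.Walk y z} (hq : x ∉ q.support)
    {p : C.graph.Walk x z} (hp : p.IsPath) (hyp : y ∉ p.support) : False := by
  have hq' : x ∉ (q.toPath : C.graph.Walk y z).support :=
    fun h => hq (Walk.support_toPath_subset q h)
  have hP2 : (Walk.cons hxy (q.toPath : C.graph.Walk y z)).IsPath :=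
    (Walk.cons_isPath_iff _ _).mpr ⟨q.toPath.2, hq'⟩
  have hequ := isAcyclic_iff_path_unique.mp hct.2.2.IsAcyclic
    (⟨p, hp⟩ : C.graph.Path x z) ⟨Walk.cons hxy (q.toPath : C.graph.Walk y z), hP2⟩
  apply hyp
  have hpe : p = Walk.cons hxy (q.toPath : C.graph.Walk y z) := congrArg Subtype.val hequ
  rw [hpe, Walk.support_cons]
  exact List.mem_cons_of_mem _ (q.toPath : C.graph.Walk y z).start_mem_support

lemma crossing_unique (hct : C.CompactType) {x : C.V} {S : Finset C.V}
    (hS : C.complComponent x S) {n m : C.N} {a b : C.V} (ha : a ∈ S)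
    (hn : C.ends n = s(a, x)) (hb : b ∈ S) (hm : C.ends m = s(b, x)) : n = m := by
  by_cases hab : a = b
  · subst hab
    exact hct.1 (hn.trans hm.symm)
  · exfalso
    have hxa : C.graph.Adj x a := (C.adj_of_ends hct hn).symm
    have hxb : C.graph.Adj x b := (C.adj_of_ends hct hm).symm
    obtain ⟨w, hw⟩ := C.exists_walk_of_connectedSub hS.2.2.1 ha hb
    have hxw : x ∉ w.support := fun h => hS.1 (hw x h)
    refine C.no_two_paths hct hxa (q := w) hxw
      (p := Walk.cons hxb Walk.nil) ((Walk.cons_isPath_iff _ _).mpr ⟨Walk.IsPath.nil, by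
        rw [Walk.support_nil, List.mem_singleton]
        rintro rfl
        exact hS.1 hb⟩) ?_
    rw [Walk.support_cons, Walk.support_nil]
    intro hmem
    rcases List.mem_cons.mp hmem with h | h
    · exact hS.1 (h ▸ ha)
    · rw [List.mem_singleton] at h
      exact hab h

lemma k_eq_one (hconn : C.Conn) (hct : C.CompactType) {x : C.V} {S : Finset C.V}
    (hS : C.complComponent x S) : C.k S = 1 := by
  obtain ⟨n0, a0, ha0, hn0⟩ := C.crossing_exists hconn hct hS
  rw [k, Finset.card_eq_one]
  refine ⟨n0, ?_⟩
  ext m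
  simp only [Finset.mem_filter, Finset.mem_univ, true_and, Finset.mem_singleton]
  constructor
  · intro hm
    obtain ⟨a, ha, hma⟩ := (C.crossing_iff hct hS).mp hm
    exact C.crossing_unique hct hS ha hma ha0 hn0
  · rintro rfl
    exact (C.crossing_iff hct hS).mpr ⟨a0, ha0, hn0⟩

lemma walk_avoid_compl (hconn : C.Conn) {x : C.V} {S : Finset C.V}
    (hS : C.complComponent x S) {z : C.V} (hz : z ∉ S) :
    ∃ w : C.graph.Walk x z, ∀ v ∈ w.support, v ∉ S := by
  obtain ⟨w0⟩ := hconn.preconnected x z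
  obtain ⟨p, hp⟩ := w0.toPath
  refine ⟨p, fun s hsmem hsS => ?_⟩
  have hr : z ∈ C.Rf x s := by
    refine C.mem_Rf.mpr ⟨p.dropUntil s hsmem, fun hx => ?_⟩
    have hxs : x ≠ s := fun h => hS.1 (h ▸ hsS)
    have hnodup : ((p.takeUntil s hsmem).append (p.dropUntil s hsmem)).support.Nodup := by
      rw [p.take_spec hsmem]; exact hp.support_nodup
    rw [Walk.support_append] at hnodup
    have hdisj := List.disjoint_of_nodup_append hnodup
    have hx' : x ∈ (p.dropUntil s hsmem).support.tail := by
      rw [(p.dropUntil s hsmem).support_eq_cons] at hx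
      rcases List.mem_cons.mp hx with h | h
      · exact absurd h hxs
      · exact h
    exact hdisj (p.takeUntil s hsmem).start_mem_support hx'
  rw [← C.complComponent_eq_Rf hS hsS] at hr
  exact hz hr

lemma connectedSub_compl (hconn : C.Conn) {x : C.V} {S : Finset C.V}
    (hS : C.complComponent x S) : C.connectedSub Sᶜ := by
  refine C.connectedSub_of_pivot (y := x) (Finset.mem_compl.mpr hS.1) ?_
  intro z hz
  obtain ⟨w, hw⟩ := C.walk_avoid_compl hconn hS (Finset.mem_compl.mp hz)
  exact ⟨w, fun v hv => Finset.mem_compl.mpr (hw v hv)⟩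

lemma subset_branch (hconn : C.Conn) {x : C.V} {A : Finset C.V} (hA : C.connectedSub A)
    (hne : A.Nonempty) (hx : x ∉ A) :
    ∃ T, C.complComponent x T ∧ A ⊆ T := by
  obtain ⟨u, hu⟩ := hne
  obtain ⟨T, hT, huT⟩ := C.exists_complComponent hconn (x := x) (z := u) (fun h => hx (h ▸ hu))
  refine ⟨T, hT, fun z hzA => ?_⟩
  rw [C.complComponent_eq_Rf hT huT]
  obtain ⟨w, hw⟩ := C.exists_walk_of_connectedSub hA hu hzA
  exact C.mem_Rf.mpr ⟨w, fun h => hx (hw x h)⟩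

lemma branches_disjoint (hct : C.CompactType) {x y : C.V} (hxy : C.graph.Adj x y)
    {S T : Finset C.V} (hS : C.complComponent x S) (hyS : y ∈ S)
    (hT : C.complComponent y T) (hxT : x ∈ T) : Disjoint S T := by
  rw [Finset.disjoint_left]
  intro z hzS hzT
  rw [C.complComponent_eq_Rf hS hyS] at hzS
  rw [C.complComponent_eq_Rf hT hxT] at hzT
  obtain ⟨w1, hw1⟩ := C.mem_Rf.mp hzS
  obtain ⟨w2, hw2⟩ := C.mem_Rf.mp hzT
  exact C.no_two_paths hct hxy (q := w1) hw1 (p := (w2.toPath : C.graph.Walk x z))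
    w2.toPath.2 (fun h => hw2 (Walk.support_toPath_subset w2 h))

lemma internal_card (hct : C.CompactType) {S : Finset C.V} (hS : C.connectedSub S) :
    C.internalNodes S + 1 = S.card := by
  classical
  haveI : Fintype (C.graph.induce (S : Set C.V)).edgeSet := Set.Finite.fintype (Set.toFinite _)
  have htree : (C.graph.induce (S : Set C.V)).IsTree := by
    refine ⟨hS, ?_⟩
    intro v c hc
    have hinj : Function.Injective
        ((SimpleGraph.Embedding.induce (G := C.graph) (S : Set C.V)).toHom : _ → C.V) :=
      Subtype.val_injective
    exact hct.2.2.IsAcyclic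
      (c.map (SimpleGraph.Embedding.induce (G := C.graph) (S : Set C.V)).toHom)
      ((Walk.map_isCycle_iff_of_injective hinj).mpr hc)
  have hcard := htree.card_edgeFinset
  have hSc : Fintype.card (S : Set C.V) = S.card :=
    (Fintype.card_congr (Equiv.subtypeEquivRight (fun x => Finset.mem_coe))).trans
      (Fintype.card_coe S)
  have hrep : ∀ n : C.N, ∃ p : C.V × C.V, C.ends n = s(p.1, p.2) := by
    intro n
    obtain ⟨a, b, h⟩ := sym2_cases (C.ends n)
    exact ⟨(a, b), h⟩
  choose F hF using hrep
  have hmem : ∀ n, C.endsIn S n = 2 → (F n).1 ∈ S ∧ (F n).2 ∈ S :=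
    fun n h2 => C.endsIn_two (hF n) h2
  have key : C.internalNodes S = (C.graph.induce (S : Set C.V)).edgeFinset.card := by
    rw [internalNodes]
    refine Finset.card_bij
      (fun n hn => s((⟨(F n).1, (hmem n (Finset.mem_filter.mp hn).2).1⟩ : (S : Set C.V)),
                     (⟨(F n).2, (hmem n (Finset.mem_filter.mp hn).2).2⟩ : (S : Set C.V))))
      ?_ ?_ ?_
    · intro n hn
      rw [mem_edgeFinset, mem_edgeSet]
      show (C.graph.induce (S : Set C.V)).Adj _ _
      simp only [comap_adj, Function.Embedding.coe_subtype]
      exact C.adj_of_ends hct (hF n)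
    · intro n1 h1 n2 h2 heq
      rw [Sym2.eq_iff] at heq
      refine hct.1 ?_
      rw [hF n1, hF n2]
      rcases heq with ⟨h1, h2⟩ | ⟨h1, h2⟩ <;> rw [Subtype.mk_eq_mk] at h1 h2
      · rw [h1, h2]
      · rw [h1, h2, Sym2.eq_swap]
    · intro e he
      obtain ⟨a, b, rfl⟩ := sym2_cases e
      rw [mem_edgeFinset, mem_edgeSet] at he
      have hadj : C.graph.Adj a.1 b.1 := by
        simpa only [comap_adj, Function.Embedding.coe_subtype] using he
      obtain ⟨hne, m, hm⟩ := C.graph_adj.mp hadj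
      have ha : a.1 ∈ S := a.2
      have hb : b.1 ∈ S := b.2
      have hm2 : C.endsIn S m = 2 := by
        rw [C.endsIn_pair hm, if_pos ha, if_pos hb]
      refine ⟨m, Finset.mem_filter.mpr ⟨Finset.mem_univ m, hm2⟩, ?_⟩
      have hFm : s((F m).1, (F m).2) = s(a.1, b.1) := (hF m).symm.trans hm
      rw [Sym2.eq_iff] at hFm ⊢
      rcases hFm with ⟨h1, h2⟩ | ⟨h1, h2⟩
      · exact Or.inl ⟨Subtype.ext h1, Subtype.ext h2⟩
      · exact Or.inr ⟨Subtype.ext h1, Subtype.ext h2⟩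
  rw [key]
  rw [← hSc]
  exact hcard

lemma genusSub_eq (hct : C.CompactType) {S : Finset C.V} (hS : C.connectedSub S) :
    C.genusSub S = ∑ v ∈ S, (C.w v : ℤ) := by
  have h := C.internal_card hct hS
  rw [genusSub]
  have h' : (C.internalNodes S : ℤ) + 1 = S.card := by exact_mod_cast h
  linarith

lemma connectedSub_univ (hconn : C.Conn) : C.connectedSub (univ : Finset C.V) := by
  obtain ⟨y⟩ := hconn.nonempty
  refine C.connectedSub_of_pivot (Finset.mem_univ y) (fun z _ => ?_)
  obtain ⟨w⟩ := hconn.preconnected y z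
  exact ⟨w, fun v _ => Finset.mem_univ v⟩

lemma card_nodes (hconn : C.Conn) (hct : C.CompactType) :
    Fintype.card C.N + 1 = Fintype.card C.V := by
  have h := C.internal_card hct (C.connectedSub_univ hconn)
  have h2 : C.internalNodes univ = Fintype.card C.N := by
    rw [internalNodes, Finset.filter_true_of_mem, Finset.card_univ]
    intro n _
    obtain ⟨a, b, hab⟩ := sym2_cases (C.ends n)
    rw [C.endsIn_pair hab]
    simp
  rw [h2, Finset.card_univ] at h
  exact h

lemma genus_eq (hconn : C.Conn) (hct : C.CompactType) : C.genus = ∑ v, (C.w v : ℤ) := by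
  have h := C.card_nodes hconn hct
  rw [genus]
  have h' : (Fintype.card C.N : ℤ) + 1 = Fintype.card C.V := by exact_mod_cast h
  linarith

lemma central_unique (hconn : C.Conn) (hct : C.CompactType) {x y : C.V}
    (hx : C.central x) (hy : C.central y) : x = y := by
  by_contra hxy
  obtain ⟨S, hS, hyS⟩ := C.exists_complComponent hconn (x := x) (z := y) (Ne.symm hxy)
  obtain ⟨T, hT, hxT⟩ := C.exists_complComponent hconn (x := y) (z := x) hxy
  have h1 := hx S hS
  have h2 := hy T hT
  have e1 := C.genusSub_eq hct hS.2.2.1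
  have e2 := C.genusSub_eq hct hT.2.2.1
  have hsub : Sᶜ ⊆ T := by
    intro z hz
    rw [C.complComponent_eq_Rf hT hxT]
    obtain ⟨w, hw⟩ := C.walk_avoid_compl hconn hS (Finset.mem_compl.mp hz)
    exact C.mem_Rf.mpr ⟨w, fun h => hw y h hyS⟩
  have hmono : ∑ v ∈ Sᶜ, (C.w v : ℤ) ≤ ∑ v ∈ T, (C.w v : ℤ) :=
    Finset.sum_le_sum_of_subset_of_nonneg hsub (fun v _ _ => by positivity)
  have hsplit : ∑ v ∈ S, (C.w v : ℤ) + ∑ v ∈ Sᶜ, (C.w v : ℤ) = ∑ v, (C.w v : ℤ) :=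
    Finset.sum_add_sum_compl S _
  have hg := C.genus_eq hconn hct
  linarith

end NodalCurve
/-- a stable curve of compact type of genus `g ≥ 2` has exactly one
central component iff no separating node has both attached tails of genus `g/2`. -/
theorem unique_central_iff_not_delta (C : NodalCurve) (hconn : C.Conn)
    (hct : C.CompactType) (hst : C.Stable) (hg : 2 ≤ C.genus) :
    (∃! x : C.V, C.central x) ↔
      ¬ ∃ (n : C.N) (S : Finset C.V), C.endsIn S n = 1 ∧
          C.isTail S ∧ C.connectedSub S ∧ C.connectedSub Sᶜ ∧
          2 * C.genusSub S = C.genus ∧ 2 * C.genusSub Sᶜ = C.genus := by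
  have hg' := C.genus_eq hconn hct
  constructor
  · rintro ⟨x, hx, -⟩ ⟨n, S, h1, -, h3, h4, h5, h6⟩
    have key : ∀ A : Finset C.V, C.connectedSub A → A.Nonempty → x ∉ A →
        2 * C.genusSub A = C.genus → False := by
      intro A hA hne hxA h2A
      obtain ⟨T, hT, hsub⟩ := C.subset_branch hconn hA hne hxA
      have hlt := hx T hT
      have eT := C.genusSub_eq hct hT.2.2.1
      have eA := C.genusSub_eq hct hA
      have hmono : ∑ v ∈ A, (C.w v : ℤ) ≤ ∑ v ∈ T, (C.w v : ℤ) :=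
        Finset.sum_le_sum_of_subset_of_nonneg hsub (fun v _ _ => by positivity)
      linarith
    obtain ⟨a, b, hab⟩ := NodalCurve.sym2_cases (C.ends n)
    have hSne : S.Nonempty ∧ Sᶜ.Nonempty := by
      rcases (C.endsIn_one_iff hab).mp h1 with ⟨haS, hbS⟩ | ⟨haS, hbS⟩
      · exact ⟨⟨a, haS⟩, ⟨b, Finset.mem_compl.mpr hbS⟩⟩
      · exact ⟨⟨b, hbS⟩, ⟨a, Finset.mem_compl.mpr haS⟩⟩
    by_cases hxS : x ∈ S
    · exact key Sᶜ h4 hSne.2 (by simp [hxS]) h6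
    · exact key S h3 hSne.1 hxS h5
  · intro hΔ
    have hex : ∃ x, C.central x := by
      by_contra hno
      push_neg at hno
      have hspec : ∀ x, ∃ S, C.complComponent x S ∧ C.genus ≤ 2 * C.genusSub S := by
        intro x
        have h := hno x
        unfold NodalCurve.central at h
        push_neg at h
        obtain ⟨S, hS, hge⟩ := h
        exact ⟨S, hS, hge⟩
      choose S hS hge using hspec
      have hwt : ∀ x, C.genusSub (S x) = ∑ v ∈ S x, (C.w v : ℤ) :=
        fun x => C.genusSub_eq hct (hS x).2.2.1
      have hsplit : ∀ x : C.V,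
          ∑ v ∈ S x, (C.w v : ℤ) + ∑ v ∈ (S x)ᶜ, (C.w v : ℤ) = ∑ v, (C.w v : ℤ) :=
        fun x => Finset.sum_add_sum_compl _ _
      have hstrict : ∀ x, C.genus < 2 * C.genusSub (S x) := by
        intro x
        rcases lt_or_eq_of_le (hge x) with h | h
        · exact h
        · exfalso
          apply hΔ
          obtain ⟨n, a, ha, hn⟩ := C.crossing_exists hconn hct (hS x)
          have hcompl : C.connectedSub (S x)ᶜ := C.connectedSub_compl hconn (hS x)
          refine ⟨n, S x, (C.crossing_iff hct (hS x)).mpr ⟨a, ha, hn⟩,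
            C.k_eq_one hconn hct (hS x), (hS x).2.2.1, hcompl, h.symm, ?_⟩
          have e2 := C.genusSub_eq hct hcompl
          have e1 := hwt x
          have e3 := hsplit x
          linarith
      choose nn aa haa hnn using fun x => C.crossing_exists hconn hct (hS x)
      have hinj : Function.Injective nn := by
        intro x y hxy
        by_contra hne
        have h1 := hnn x
        have h2 := hnn y
        rw [hxy] at h1
        have heq : s(aa y, y) = s(aa x, x) := h2.symm.trans h1
        rcases Sym2.eq_iff.mp heq with ⟨-, h4⟩ | ⟨h3, h4⟩
        · exact hne h4.symm
        · have hyS : y ∈ S x := by rw [h4]; exact haa x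
          have hxT : x ∈ S y := by rw [← h3]; exact haa y
          have hadj : C.graph.Adj x y := by
            refine C.graph_adj.mpr ⟨hne, nn x, ?_⟩
            rw [hnn x, ← h4, Sym2.eq_swap]
          have hdisj := C.branches_disjoint hct hadj (hS x) hyS (hS y) hxT
          have hm : ∑ v ∈ S x, (C.w v : ℤ) + ∑ v ∈ S y, (C.w v : ℤ) ≤ ∑ v, (C.w v : ℤ) := by
            rw [← Finset.sum_union hdisj]
            exact Finset.sum_le_sum_of_subset_of_nonneg (Finset.subset_univ _)
              (fun v _ _ => by positivity)
          have hx' := hstrict x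
          have hy' := hstrict y
          rw [hwt x] at hx'
          rw [hwt y] at hy'
          linarith
      have hcard := Fintype.card_le_of_injective nn hinj
      have hcn := C.card_nodes hconn hct
      omega
    obtain ⟨x, hx⟩ := hex
    exact ⟨x, hx, fun y hy => C.central_unique hconn hct hy hx⟩
end

section
/- Let C be a stable curve of compact type of genus g ≥ 2 and X an irreducible component. Let M be an X-quasistable line bundle on C of multidegree d_bar and total degree d, and let M' be a line bundle of degree 1 on X and degree 0 on all other components. Then the line bundle M ⊗ M' ⊗ O_C(−Σ Z), where the sum runs over all d_bar-big tails Z of C not containing X, is X-quasistable (of total degree d+1). -/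
open Finset

namespace NodalCurve

variable (C : NodalCurve)

lemma exists_rep (z : Sym2 (C.V)) : ∃ a b, z = s(a, b) :=
  z.ind fun a b => ⟨a, b, rfl⟩

lemma endsIn_eq {n : C.N} {a b : C.V} (h : C.ends n = s(a, b)) (S : Finset C.V) :
    C.endsIn S n = (if a ∈ S then 1 else 0) + (if b ∈ S then 1 else 0) := by
  rw [endsIn, h, Sym2.lift_mk]

lemma endsIn_sum (S : Finset C.V) (n : C.N) :
    C.endsIn S n = ∑ v ∈ S, C.endsIn {v} n := by
  obtain ⟨a, b, h⟩ := C.exists_rep (C.ends n)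
  rw [C.endsIn_eq h]
  have : ∀ v ∈ S, C.endsIn {v} n =
      (if a = v then 1 else 0) + (if b = v then 1 else 0) := by
    intro v _
    rw [C.endsIn_eq h]
    simp [Finset.mem_singleton]
  rw [Finset.sum_congr rfl this, Finset.sum_add_distrib,
    Finset.sum_ite_eq S a (fun _ => 1), Finset.sum_ite_eq S b (fun _ => 1)]

lemma degw_singleton (v : C.V) :
    C.degω {v} = 2 * (C.w v : ℤ) - 2 + ∑ n, (C.endsIn {v} n : ℤ) := by
  rw [degω, Finset.sum_singleton]

lemma degw_eq (S : Finset C.V) : C.degω S = ∑ v ∈ S, C.degω {v} := by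
  rw [degω]
  have : ∀ n, (C.endsIn S n : ℤ) = ∑ v ∈ S, (C.endsIn {v} n : ℤ) := by
    intro n; rw [C.endsIn_sum S n]; push_cast; ring
  rw [Finset.sum_congr rfl (fun n _ => this n), Finset.sum_comm]
  rw [← Finset.sum_add_distrib]
  exact Finset.sum_congr rfl fun v _ => (C.degw_singleton v).symm

lemma degw_pos (hst : C.Stable) {S : Finset C.V} (hS : S.Nonempty) : 1 ≤ C.degω S := by
  rw [degw_eq]
  have h1 : ∀ v ∈ S, (1:ℤ) ≤ C.degω {v} := by
    intro v _
    rw [degw_singleton]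
    exact hst v
  calc (1 : ℤ) ≤ S.card • (1:ℤ) := by
        simpa using Nat.one_le_iff_ne_zero.2 (Finset.card_ne_zero_of_mem hS.choose_spec)
  _ ≤ ∑ v ∈ S, C.degω {v} := Finset.card_nsmul_le_sum S _ 1 h1

lemma endsIn_univ (n : C.N) : C.endsIn Finset.univ n = 2 := by
  obtain ⟨a, b, h⟩ := C.exists_rep (C.ends n)
  rw [C.endsIn_eq h]; simp

lemma sum_two_w (T : Finset C.V) :
    ∑ v ∈ T, (2 * (C.w v : ℤ) - 2) = 2 * (∑ v ∈ T, (C.w v : ℤ)) - 2 * T.card := by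
  rw [Finset.sum_sub_distrib, Finset.mul_sum]
  simp [mul_comm]

lemma degw_univ : C.degω Finset.univ = 2 * C.genus - 2 := by
  rw [degω, genus]
  have h1 : ∀ n : C.N, (C.endsIn Finset.univ n : ℤ) = 2 := fun n => by
    rw [C.endsIn_univ n]; norm_num
  rw [Finset.sum_congr rfl (fun n _ => h1 n), C.sum_two_w]
  simp only [Finset.sum_const, smul_eq_mul, Finset.card_univ]
  ring

lemma degw_compl (S : Finset C.V) :
    C.degω S + C.degω (Finset.univ \ S) = 2 * C.genus - 2 := by
  rw [← C.degw_univ, C.degw_eq S, C.degw_eq (Finset.univ \ S), C.degw_eq Finset.univ]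
  rw [← Finset.sum_sdiff (Finset.subset_univ S)]
  ring

lemma endsIn_compl (S : Finset C.V) (n : C.N) :
    C.endsIn (Finset.univ \ S) n + C.endsIn S n = 2 := by
  obtain ⟨a, b, h⟩ := C.exists_rep (C.ends n)
  rw [C.endsIn_eq h, C.endsIn_eq h]
  by_cases ha : a ∈ S <;> by_cases hb : b ∈ S <;>
    simp [ha, hb, Finset.mem_sdiff]

lemma k_compl (S : Finset C.V) : C.k (Finset.univ \ S) = C.k S := by
  unfold k
  congr 1
  apply Finset.filter_congr
  intro n _
  have := C.endsIn_compl S n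
  constructor <;> intro h <;> omega

lemma endsIn_le_two (S : Finset C.V) (n : C.N) : C.endsIn S n ≤ 2 := by
  obtain ⟨a, b, h⟩ := C.exists_rep (C.ends n)
  rw [C.endsIn_eq h]
  split_ifs <;> omega

lemma sum_endsIn (S : Finset C.V) :
    ∑ n, C.endsIn S n = C.k S + 2 * C.internalNodes S := by
  have : ∀ n : C.N, C.endsIn S n =
      (if C.endsIn S n = 1 then 1 else 0) + 2 * (if C.endsIn S n = 2 then 1 else 0) := by
    intro n
    have := C.endsIn_le_two S n
    split_ifs <;> omega
  rw [Finset.sum_congr rfl (fun n _ => this n), Finset.sum_add_distrib, ← Finset.mul_sum]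
  rw [Finset.sum_boole, Finset.sum_boole]
  rfl

lemma degw_adjunction (S : Finset C.V) :
    C.degω S = 2 * C.genusSub S - 2 + C.k S := by
  rw [degω, genusSub]
  have : ∑ n, (C.endsIn S n : ℤ) = (C.k S : ℤ) + 2 * C.internalNodes S := by
    have h2 := C.sum_endsIn S
    have : ((∑ n, C.endsIn S n : ℕ) : ℤ) = ((C.k S + 2 * C.internalNodes S : ℕ) : ℤ) := by
      rw [h2]
    push_cast at this
    linarith
  rw [this, C.sum_two_w]
  ring

end NodalCurve

namespace NodalCurve

variable (C : NodalCurve)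

/-- The graph with the edge corresponding to the node `n` removed. -/
def Gd (n : C.N) : SimpleGraph C.V := C.graph.deleteEdges {C.ends n}

/-- The tail determined by the node `n`, on the side away from `X`. -/
noncomputable def Zt (X : C.V) (n : C.N) : Finset C.V :=
  @Finset.filter _ (fun v => ¬ (C.Gd n).Reachable v X) (Classical.decPred _) Finset.univ

lemma mem_Zt {X : C.V} {n : C.N} {v : C.V} :
    v ∈ C.Zt X n ↔ ¬ (C.Gd n).Reachable v X := by
  have h0 := @Finset.mem_filter C.V (fun v => ¬ (C.Gd n).Reachable v X)
    (Classical.decPred _) Finset.univ v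
  rw [Zt, h0]
  simp

lemma X_not_mem_Zt (X : C.V) (n : C.N) : X ∉ C.Zt X n := by
  rw [mem_Zt, not_not]

lemma adj_of_node {n : C.N} {a b : C.V} (h : C.ends n = s(a, b)) (hab : a ≠ b) :
    C.graph.Adj a b := by
  rw [graph, SimpleGraph.fromRel_adj]
  exact ⟨hab, Or.inl ⟨n, h⟩⟩

lemma node_of_adj {a b : C.V} (h : C.graph.Adj a b) : ∃ n, C.ends n = s(a, b) := by
  rw [graph, SimpleGraph.fromRel_adj] at h
  rcases h.2 with ⟨n, hn⟩ | ⟨n, hn⟩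
  · exact ⟨n, hn⟩
  · exact ⟨n, hn.trans Sym2.eq_swap⟩

lemma Gd_adj_of_ne {n : C.N} {a b : C.V} (h : C.graph.Adj a b)
    (hne : s(a, b) ≠ C.ends n) : (C.Gd n).Adj a b := by
  rw [Gd, SimpleGraph.deleteEdges_adj]
  exact ⟨h, by simpa using hne⟩

lemma bridge (hct : C.CompactType) {n : C.N} {a b : C.V} (h : C.ends n = s(a, b)) :
    ¬ (C.Gd n).Reachable a b := by
  have hab : a ≠ b := by
    have := hct.2.1 n
    rw [h, Sym2.mk_isDiag_iff] at this
    exact this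
  have hadj : C.graph.Adj a b := C.adj_of_node h hab
  have hac : C.graph.IsAcyclic := hct.2.2.2
  have hbr := (SimpleGraph.isAcyclic_iff_forall_adj_isBridge.mp hac) hadj
  rw [SimpleGraph.isBridge_iff] at hbr
  have : C.Gd n = C.graph \ SimpleGraph.fromEdgeSet {s(a, b)} := by
    rw [Gd, SimpleGraph.deleteEdges, h]
  rw [this]
  exact hbr

lemma walk_reach (hct : C.CompactType) {n : C.N} {a b : C.V}
    (h : C.ends n = s(a, b)) :
    ∀ {u v' : C.V}, C.graph.Walk u v' → (C.Gd n).Reachable u v' ∨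
      ((C.Gd n).Reachable u a ∧ (C.Gd n).Reachable v' b) ∨
      ((C.Gd n).Reachable u b ∧ (C.Gd n).Reachable v' a) := by
  have hbr := C.bridge hct h
  intro u v' p
  induction p with
  | nil => exact Or.inl (SimpleGraph.Reachable.refl _)
  | @cons u x _ hadj p ih =>
    by_cases hs : s(u, x) = C.ends n
    · rw [h] at hs
      rcases Sym2.eq_iff.mp hs with ⟨rfl, rfl⟩ | ⟨rfl, rfl⟩
      · rcases ih with h1 | ⟨h1, h2⟩ | ⟨h1, h2⟩
        · exact Or.inr (Or.inl ⟨SimpleGraph.Reachable.refl _, h1.symm⟩)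
        · exact absurd h1.symm hbr
        · exact Or.inl h2.symm
      · rcases ih with h1 | ⟨h1, h2⟩ | ⟨h1, h2⟩
        · exact Or.inr (Or.inr ⟨SimpleGraph.Reachable.refl _, h1.symm⟩)
        · exact Or.inl h2.symm
        · exact absurd h1 hbr
    · have hadj' := C.Gd_adj_of_ne hadj hs
      rcases ih with h1 | ⟨h1, h2⟩ | ⟨h1, h2⟩
      · exact Or.inl (hadj'.reachable.trans h1)
      · exact Or.inr (Or.inl ⟨hadj'.reachable.trans h1, h2⟩)
      · exact Or.inr (Or.inr ⟨hadj'.reachable.trans h1, h2⟩)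

lemma reach_or (hconn : C.Conn) (hct : C.CompactType) {n : C.N} {a b : C.V}
    (h : C.ends n = s(a, b))
    (v : C.V) : (C.Gd n).Reachable v a ∨ (C.Gd n).Reachable v b := by
  obtain ⟨p⟩ := hconn.preconnected v a
  rcases C.walk_reach hct h p with h1 | ⟨h1, h2⟩ | ⟨h1, h2⟩
  · exact Or.inl h1
  · exact Or.inl h1
  · exact Or.inr h1

/-- Orientation of the node `n`: `a` is on the `X`-side, `b` on the far side. -/
lemma Zt_spec (hconn : C.Conn) (hct : C.CompactType) (X : C.V) (n : C.N) :
    ∃ a b, C.ends n = s(a, b) ∧ a ∉ C.Zt X n ∧ b ∈ C.Zt X n ∧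
      (∀ v, v ∈ C.Zt X n ↔ (C.Gd n).Reachable v b) ∧
      (∀ v, v ∉ C.Zt X n ↔ (C.Gd n).Reachable v a) := by
  obtain ⟨a, b, h⟩ := C.exists_rep (C.ends n)
  have hbr := C.bridge hct h
  have key : ∀ a' b', C.ends n = s(a', b') → (C.Gd n).Reachable X a' →
      ¬ (C.Gd n).Reachable a' b' →
      a' ∉ C.Zt X n ∧ b' ∈ C.Zt X n ∧
      (∀ v, v ∈ C.Zt X n ↔ (C.Gd n).Reachable v b') ∧
      (∀ v, v ∉ C.Zt X n ↔ (C.Gd n).Reachable v a') := by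
    intro a' b' h' hXa hbr'
    have ha : a' ∉ C.Zt X n := by
      rw [mem_Zt, not_not]; exact hXa.symm
    have hb : b' ∈ C.Zt X n := by
      rw [mem_Zt]
      intro hr
      exact hbr' (hXa.symm.trans hr.symm)
    have hmem : ∀ v, v ∈ C.Zt X n ↔ (C.Gd n).Reachable v b' := by
      intro v
      constructor
      · intro hv
        rw [mem_Zt] at hv
        rcases C.reach_or hconn hct h' v with h1 | h1
        · exact absurd (h1.trans hXa.symm) hv
        · exact h1
      · intro hv
        rw [mem_Zt]
        intro hr
        exact hbr' (hXa.symm.trans (hr.symm.trans hv))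
    have hnmem : ∀ v, v ∉ C.Zt X n ↔ (C.Gd n).Reachable v a' := by
      intro v
      constructor
      · intro hv
        rw [mem_Zt, not_not] at hv
        exact hv.trans hXa
      · intro hv
        rw [mem_Zt, not_not]
        exact hv.trans hXa.symm
    exact ⟨ha, hb, hmem, hnmem⟩
  rcases C.reach_or hconn hct h X with hXa | hXb
  · obtain ⟨ha, hb, h1, h2⟩ := key a b h hXa hbr
    exact ⟨a, b, h, ha, hb, h1, h2⟩
  · obtain ⟨ha, hb, h1, h2⟩ := key b a (h.trans Sym2.eq_swap) hXb
      (fun hr => hbr hr.symm)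
    exact ⟨b, a, h.trans Sym2.eq_swap, ha, hb, h1, h2⟩

/-- Any node crossing the boundary of `Zt X n` is `n` itself. -/
lemma crossing_eq (hconn : C.Conn) (hct : C.CompactType) {X : C.V} {n m : C.N}
    {x y : C.V} (hm : C.ends m = s(x, y)) (hx : x ∈ C.Zt X n) (hy : y ∉ C.Zt X n) :
    m = n := by
  by_contra hne
  obtain ⟨a, b, h, ha, hb, hmem, hnmem⟩ := C.Zt_spec hconn hct X n
  have hxy : x ≠ y := fun h' => hy (h' ▸ hx)
  have hadj : C.graph.Adj x y := C.adj_of_node hm hxy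
  have hsne : s(x, y) ≠ C.ends n := by
    intro h'
    exact hne (hct.1 (hm.trans (h' ▸ rfl)))
  have hadj' := C.Gd_adj_of_ne hadj hsne
  rw [hnmem] at hy
  have hx' : x ∉ C.Zt X n := (hnmem x).mpr (hadj'.reachable.trans hy)
  exact hx' hx

end NodalCurve

namespace NodalCurve

variable (C : NodalCurve)

lemma k_Zt (hconn : C.Conn) (hct : C.CompactType) (X : C.V) (n : C.N) :
    C.k (C.Zt X n) = 1 := by
  obtain ⟨a, b, h, ha, hb, hmem, hnmem⟩ := C.Zt_spec hconn hct X n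
  have hfil : (Finset.univ.filter fun m => C.endsIn (C.Zt X n) m = 1) = {n} := by
    ext m
    simp only [Finset.mem_filter, Finset.mem_univ, true_and, Finset.mem_singleton]
    constructor
    · intro hm
      obtain ⟨x, y, hxy⟩ := C.exists_rep (C.ends m)
      rw [C.endsIn_eq hxy] at hm
      by_cases hx : x ∈ C.Zt X n <;> by_cases hy : y ∈ C.Zt X n <;>
        simp [hx, hy] at hm
      · exact C.crossing_eq hconn hct hxy hx hy
      · exact C.crossing_eq hconn hct (hxy.trans Sym2.eq_swap) hy hx
    · rintro rfl
      rw [C.endsIn_eq h]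
      simp [ha, hb]
  rw [k, hfil, Finset.card_singleton]

/-- A tail with a given oriented boundary node is unique: it equals the set of
vertices reachable (in the edge-deleted graph) from the inner endpoint. -/
lemma tail_eq (hconn : C.Conn) (hct : C.CompactType) {A : Finset C.V}
    (hk : C.k A = 1) {n : C.N} {a b : C.V} (h : C.ends n = s(a, b))
    (ha : a ∈ A) (hb : b ∉ A) : ∀ v, v ∈ A ↔ (C.Gd n).Reachable v a := by
  have hab : a ≠ b := fun h' => hb (h' ▸ ha)
  have hn1 : C.endsIn A n = 1 := by
    rw [C.endsIn_eq h]; simp [ha, hb]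
  have huniq : ∀ m, C.endsIn A m = 1 → m = n := by
    intro m hm
    obtain ⟨x, hx⟩ := Finset.card_eq_one.mp hk
    have h1 : m ∈ Finset.univ.filter fun m => C.endsIn A m = 1 := by
      simp [hm]
    have h2 : n ∈ Finset.univ.filter fun m => C.endsIn A m = 1 := by
      simp [hn1]
    rw [hx, Finset.mem_singleton] at h1 h2
    exact h1.trans h2.symm
  have hbr := C.bridge hct h
  have main : ∀ {v u : C.V}, C.graph.Walk v u → u = a →
      ((v ∈ A → (C.Gd n).Reachable v a) ∧ (v ∉ A → (C.Gd n).Reachable v b)) := by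
    intro v u p
    induction p with
    | nil =>
      rintro rfl
      exact ⟨fun _ => SimpleGraph.Reachable.refl _, fun hv => absurd ha hv⟩
    | @cons v x _ hadj p ih =>
      rintro rfl
      have ihx := ih rfl
      by_cases hs : s(v, x) = C.ends n
      · rw [h] at hs
        rcases Sym2.eq_iff.mp hs with ⟨rfl, rfl⟩ | ⟨rfl, rfl⟩
        · exact ⟨fun _ => SimpleGraph.Reachable.refl _, fun hv => absurd ha hv⟩
        · exact ⟨fun hv => absurd hv hb, fun _ => SimpleGraph.Reachable.refl _⟩
      · have hadj' := C.Gd_adj_of_ne hadj hs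
        have hvx : (v ∈ A) ↔ (x ∈ A) := by
          by_contra hne
          obtain ⟨m, hm⟩ := C.node_of_adj hadj
          have hm1 : C.endsIn A m = 1 := by
            rw [C.endsIn_eq hm]
            by_cases h1 : v ∈ A <;> by_cases h2 : x ∈ A <;>
              simp [h1, h2] at hne ⊢ <;> tauto
          exact hs (hm ▸ (huniq m hm1 ▸ rfl))
        exact ⟨fun hv => hadj'.reachable.trans (ihx.1 (hvx.mp hv)),
               fun hv => hadj'.reachable.trans (ihx.2 (fun hx => hv (hvx.mpr hx)))⟩
  intro v
  constructor
  · intro hv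
    obtain ⟨p⟩ := hconn.preconnected v a
    exact (main p rfl).1 hv
  · intro hr
    by_contra hv
    obtain ⟨p⟩ := hconn.preconnected v a
    have := (main p rfl).2 hv
    exact hbr (hr.symm.trans this)

end NodalCurve

namespace NodalCurve

variable (C : NodalCurve)

/-- The signed crossing coefficient of a subcurve `S` at the node `n`
(positive side: the far-from-`X` side `Zt X n`). -/
noncomputable def eps (X : C.V) (S : Finset C.V) (n : C.N) : ℤ :=
  (C.endsIn (S ∩ C.Zt X n) n : ℤ) - (C.endsIn (S \ C.Zt X n) n : ℤ)

lemma eps_eq {X : C.V} {n : C.N} {a b : C.V} (h : C.ends n = s(a, b))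
    (ha : a ∉ C.Zt X n) (hb : b ∈ C.Zt X n) (S : Finset C.V) :
    C.eps X S n = (if b ∈ S then 1 else 0) - (if a ∈ S then 1 else 0) := by
  rw [eps, C.endsIn_eq h, C.endsIn_eq h]
  by_cases h1 : a ∈ S <;> by_cases h2 : b ∈ S <;>
    simp [h1, h2, Finset.mem_inter, Finset.mem_sdiff, ha, hb]

lemma eps_abs (hconn : C.Conn) (hct : C.CompactType) (X : C.V) (S : Finset C.V)
    (n : C.N) : |C.eps X S n| ≤ if C.endsIn S n = 1 then 1 else 0 := by
  obtain ⟨a, b, h, ha, hb, _, _⟩ := C.Zt_spec hconn hct X n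
  rw [C.eps_eq h ha hb, C.endsIn_eq h]
  have hab : a ≠ b := fun h' => ha (h' ▸ hb)
  by_cases h1 : a ∈ S <;> by_cases h2 : b ∈ S <;> simp [h1, h2]

/-- The key combinatorial identity: summing over all nodes the crossing
coefficient times the indicator of `w` in the far tail telescopes. -/
lemma F_eq (hconn : C.Conn) (hct : C.CompactType) (X : C.V) (S : Finset C.V)
    (w : C.V) :
    ∑ n, C.eps X S n * (if w ∈ C.Zt X n then 1 else 0) =
      (if w ∈ S then (1:ℤ) else 0) - (if X ∈ S then 1 else 0) := by
  set f : C.V → ℤ := fun w =>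
    (∑ n, C.eps X S n * (if w ∈ C.Zt X n then 1 else 0)) -
      (if w ∈ S then (1:ℤ) else 0) with hf
  have step : ∀ {u v : C.V}, C.graph.Adj u v → f u = f v := by
    intro u v hadj
    obtain ⟨m, hm⟩ := C.node_of_adj hadj
    have key : (∑ n, C.eps X S n * (if u ∈ C.Zt X n then 1 else 0)) -
        (∑ n, C.eps X S n * (if v ∈ C.Zt X n then 1 else 0)) =
        (if u ∈ S then (1:ℤ) else 0) - (if v ∈ S then 1 else 0) := by
      rw [← Finset.sum_sub_distrib]
      rw [Finset.sum_eq_single m]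
      · obtain ⟨a, b, h, ha, hb, hmem, hnmem⟩ := C.Zt_spec hconn hct X m
        rw [C.eps_eq h ha hb]
        have hsab : s(u, v) = s(a, b) := hm ▸ h
        rcases Sym2.eq_iff.mp hsab with ⟨rfl, rfl⟩ | ⟨rfl, rfl⟩
        · rw [if_neg ha, if_pos hb]; ring
        · rw [if_pos hb, if_neg ha]; ring
      · intro n _ hnm
        have hsne : s(u, v) ≠ C.ends n := by
          intro h'
          exact hnm (hct.1 (hm.trans h')).symm
        have hadj' := C.Gd_adj_of_ne hadj hsne
        have hiff : (u ∈ C.Zt X n) ↔ (v ∈ C.Zt X n) := by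
          rw [C.mem_Zt, C.mem_Zt]
          constructor
          · intro h1 h2; exact h1 (hadj'.reachable.trans h2)
          · intro h1 h2; exact h1 (hadj'.symm.reachable.trans h2)
        by_cases h1 : u ∈ C.Zt X n
        · rw [if_pos h1, if_pos (hiff.mp h1)]; ring
        · rw [if_neg h1, if_neg (fun h2 => h1 (hiff.mpr h2))]; ring
      · intro hm'; exact absurd (Finset.mem_univ m) hm'
    simp only [hf]
    linarith [key]
  have const : ∀ {u v : C.V}, C.graph.Walk u v → f u = f v := by
    intro u v p
    induction p with
    | nil => rfl
    | cons hadj p ih => exact (step hadj).trans ih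
  obtain ⟨p⟩ := hconn.preconnected w X
  have hfx : f X = - (if X ∈ S then (1:ℤ) else 0) := by
    simp only [hf]
    have h0 : ∀ n : C.N, C.eps X S n * (if X ∈ C.Zt X n then (1:ℤ) else 0) = 0 := by
      intro n
      rw [if_neg (C.X_not_mem_Zt X n)]
      ring
    rw [Finset.sum_congr rfl (fun n _ => h0 n)]
    simp
  have := (const p).trans hfx
  simp only [hf] at this
  linarith [this]

end NodalCurve

namespace NodalCurve

variable (C : NodalCurve)

lemma sum_ind (t : Finset C.V) (h : C.V → ℤ) :
    ∑ w, (if w ∈ t then (1:ℤ) else 0) * h w = ∑ w ∈ t, h w := by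
  have h2 := Finset.sum_ite_mem Finset.univ t h
  rw [Finset.univ_inter] at h2
  rw [← h2]
  exact Finset.sum_congr rfl fun w _ => by by_cases hw : w ∈ t <;> simp [hw]

/-- Decomposition of any additive functional over a subcurve as a signed sum of its
values on the tails `Zt X n`, for a functional with total sum zero. -/
lemma key_identity (hconn : C.Conn) (hct : C.CompactType) (X : C.V)
    (h : C.V → ℤ) (hsum : ∑ v, h v = 0) (S : Finset C.V) :
    ∑ v ∈ S, h v = ∑ n, C.eps X S n * (∑ w ∈ C.Zt X n, h w) := by
  calc ∑ v ∈ S, h v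
      = ∑ w, ((if w ∈ S then (1:ℤ) else 0) - (if X ∈ S then 1 else 0)) * h w := by
        have e1 : ∀ w, ((if w ∈ S then (1:ℤ) else 0) - (if X ∈ S then 1 else 0)) * h w
            = (if w ∈ S then (1:ℤ) else 0) * h w - (if X ∈ S then 1 else 0) * h w := by
          intro w; ring
        rw [Finset.sum_congr rfl (fun w _ => e1 w), Finset.sum_sub_distrib,
          C.sum_ind S h, ← Finset.mul_sum, hsum, mul_zero, sub_zero]
    _ = ∑ w, (∑ n, C.eps X S n * (if w ∈ C.Zt X n then 1 else 0)) * h w :=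
        Finset.sum_congr rfl fun w _ => by rw [C.F_eq hconn hct X S w]
    _ = ∑ n, C.eps X S n * (∑ w ∈ C.Zt X n, h w) := by
        have e2 : ∀ w, (∑ n, C.eps X S n * (if w ∈ C.Zt X n then 1 else 0)) * h w
            = ∑ n, C.eps X S n * ((if w ∈ C.Zt X n then (1:ℤ) else 0) * h w) := by
          intro w
          rw [Finset.sum_mul]
          exact Finset.sum_congr rfl fun n _ => by ring
        rw [Finset.sum_congr rfl (fun w _ => e2 w), Finset.sum_comm]
        exact Finset.sum_congr rfl fun n _ => by
          rw [← Finset.mul_sum, C.sum_ind (C.Zt X n) h]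

end NodalCurve

namespace NodalCurve

variable (C : NodalCurve)

lemma big_tail_term (hconn : C.Conn) (hct : C.CompactType) (X : C.V)
    {S : Finset C.V} (hkS : C.k S = 1) (hXS : X ∉ S)
    {c1 c2 : C.V} (hc1 : c1 ∈ S) (hc2 : c2 ∉ S) (hadj : C.graph.Adj c1 c2) (n : C.N) :
    ((if c1 ∈ C.Zt X n then (1:ℤ) else 0) - (if c2 ∈ C.Zt X n then 1 else 0)) =
      if S = C.Zt X n then 1 else 0 := by
  obtain ⟨m, hm⟩ := C.node_of_adj hadj
  obtain ⟨a, b, h, ha, hb, hmem, hnmem⟩ := C.Zt_spec hconn hct X n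
  have htail := C.tail_eq hconn hct hkS hm hc1 hc2
  by_cases h1 : c1 ∈ C.Zt X n <;> by_cases h2 : c2 ∈ C.Zt X n
  · rw [if_pos h1, if_pos h2, if_neg (fun (hSZ : S = C.Zt X n) => hc2 (hSZ ▸ h2))]
    ring
  · -- c1 ∈ Zt, c2 ∉ Zt : S = Zt X n
    have hmn : m = n := C.crossing_eq hconn hct hm h1 h2
    subst hmn
    have hs : s(c1, c2) = s(a, b) := hm.symm.trans h
    rcases Sym2.eq_iff.mp hs with ⟨rfl, rfl⟩ | ⟨rfl, rfl⟩
    · exact absurd h1 ha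
    · have hSZ : S = C.Zt X m := by
        ext v
        rw [htail v, hmem v]
      rw [if_pos h1, if_neg h2, if_pos hSZ]
      ring
  · -- c1 ∉ Zt, c2 ∈ Zt : contradiction (X would be in S)
    exfalso
    have hmn : m = n := C.crossing_eq hconn hct (hm.trans Sym2.eq_swap) h2 h1
    subst hmn
    have hs : s(c1, c2) = s(a, b) := hm.symm.trans h
    rcases Sym2.eq_iff.mp hs with ⟨rfl, rfl⟩ | ⟨rfl, rfl⟩
    · exact hXS ((htail X).mpr ((hnmem X).mp (C.X_not_mem_Zt X m)))
    · exact absurd h2 ha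
  · rw [if_neg h1, if_neg h2, if_neg (fun (hSZ : S = C.Zt X n) => h1 (hSZ ▸ hc1))]
    ring

lemma qhelp0 {x y c : ℚ} (hc : 0 < c) : x - y / c = (x * c - y) / c := by
  field_simp

lemma qhelp1 {x y q c : ℚ} (hc : 0 < c) (h : |x * c - y| ≤ q * c / 2) :
    |x - y / c| ≤ q / 2 := by
  rw [qhelp0 hc, abs_div, abs_of_pos hc, div_le_iff₀ hc]
  linarith

lemma qhelp2 {x y q c : ℚ} (hc : 0 < c) (h : -(q * c / 2) < x * c - y) :
    -(q / 2) < x - y / c := by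
  rw [qhelp0 hc, lt_div_iff₀ hc]
  linarith

lemma qhelp3 {x y q c : ℚ} (hc : 0 < c) (h : |x - y / c| ≤ q / 2) :
    |x * c - y| ≤ q * c / 2 := by
  rw [qhelp0 hc, abs_div, abs_of_pos hc, div_le_iff₀ hc] at h
  linarith

end NodalCurve

open Finset in
/-- Lemma on twisting: if `M` is `X`-quasistable of multidegree `e`, `M'` has
degree 1 on `X` and 0 elsewhere, then `M ⊗ M' ⊗ O_C(-Σ Z)`, the sum over all `e`-big
tails `Z` not containing `X`, is `X`-quasistable of total degree `d+1`. Twisting by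
`O_C(-Z)` adds `+1` to the component of `Z` and `-1` to the component of `Z'` meeting
the separating node of the tail `Z` (recorded by `cross`). -/
theorem twist_quasistable (C : NodalCurve) (hconn : C.Conn) (hct : C.CompactType)
    (hst : C.Stable) (hg : 2 ≤ C.genus) (X : C.V)
    (e : C.V → ℤ) (hq : C.Xquasistable X e)
    (B : Finset (Finset C.V)) (hB : ∀ S : Finset C.V, S ∈ B ↔ C.isBigTail e S ∧ X ∉ S)
    (cross : Finset C.V → C.V × C.V)
    (hcross : ∀ S ∈ B, (cross S).1 ∈ S ∧ (cross S).2 ∉ S ∧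
        C.graph.Adj (cross S).1 (cross S).2)
    (e'' : C.V → ℤ)
    (he'' : ∀ v : C.V, e'' v = e v + (if v = X then 1 else 0) +
        ∑ S ∈ B, ((if v = (cross S).1 then 1 else 0) -
          (if v = (cross S).2 then 1 else 0))) :
    C.Xquasistable X e'' ∧ C.totalDeg e'' = C.totalDeg e + 1 := by
  set g : ℤ := C.genus with hgdef
  set d : ℤ := C.totalDeg e with hddef
  have hc2 : (0:ℤ) < 2 * g - 2 := by linarith
  -- total degree
  have htot : C.totalDeg e'' = d + 1 := by
    rw [NodalCurve.totalDeg, Finset.sum_congr rfl (fun v _ => he'' v),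
      Finset.sum_add_distrib, Finset.sum_add_distrib]
    have h1 : ∑ v, (if v = X then (1:ℤ) else 0) = 1 := by
      rw [Finset.sum_ite_eq' Finset.univ X (fun _ => (1:ℤ))]
      simp
    have h2 : ∑ v, ∑ S ∈ B, ((if v = (cross S).1 then (1:ℤ) else 0) -
        (if v = (cross S).2 then 1 else 0)) = 0 := by
      rw [Finset.sum_comm]
      apply Finset.sum_eq_zero
      intro S _
      rw [Finset.sum_sub_distrib, Finset.sum_ite_eq' Finset.univ (cross S).1
        (fun _ => (1:ℤ)), Finset.sum_ite_eq' Finset.univ (cross S).2 (fun _ => (1:ℤ))]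
      simp
    rw [h1, h2, hddef, NodalCurve.totalDeg]
    ring
  -- the additive functional
  set hfun : C.V → ℤ := fun v => e'' v * (2 * g - 2) - (d + 1) * C.degω {v} with hfdef
  have hlam : ∀ S : Finset C.V,
      ∑ v ∈ S, hfun v = C.degSub e'' S * (2 * g - 2) - (d + 1) * C.degω S := by
    intro S
    rw [NodalCurve.degSub, C.degw_eq S, Finset.sum_sub_distrib, ← Finset.sum_mul,
      ← Finset.mul_sum]
  have hsum0 : ∑ v, hfun v = 0 := by
    have h0 := hlam Finset.univ
    have h1 : C.degSub e'' Finset.univ = d + 1 := htot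
    rw [h1, C.degw_univ, ← hgdef] at h0
    rw [h0]
    ring
  -- the B-sum at each tail Zt X n
  have hBsum : ∀ n : C.N, ∑ S ∈ B,
      ((if (cross S).1 ∈ C.Zt X n then (1:ℤ) else 0) -
        (if (cross S).2 ∈ C.Zt X n then 1 else 0)) =
      if C.Zt X n ∈ B then 1 else 0 := by
    intro n
    have hterm : ∀ S ∈ B, ((if (cross S).1 ∈ C.Zt X n then (1:ℤ) else 0) -
        (if (cross S).2 ∈ C.Zt X n then 1 else 0)) = if S = C.Zt X n then 1 else 0 := by
      intro S hS
      obtain ⟨h1, h2, h3⟩ := hcross S hS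
      obtain ⟨hbig, hXS⟩ := (hB S).mp hS
      exact C.big_tail_term hconn hct X hbig.1 hXS h1 h2 h3 n
    rw [Finset.sum_congr rfl hterm, Finset.sum_ite_eq' B (C.Zt X n) (fun _ => (1:ℤ))]
  -- degree of e'' on the tails
  have hdegZ : ∀ n : C.N, C.degSub e'' (C.Zt X n) =
      C.degSub e (C.Zt X n) + (if C.Zt X n ∈ B then 1 else 0) := by
    intro n
    rw [NodalCurve.degSub, Finset.sum_congr rfl (fun v _ => he'' v),
      Finset.sum_add_distrib, Finset.sum_add_distrib]
    have h1 : ∑ v ∈ C.Zt X n, (if v = X then (1:ℤ) else 0) = 0 := by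
      rw [Finset.sum_ite_eq' (C.Zt X n) X (fun _ => (1:ℤ)), if_neg (C.X_not_mem_Zt X n)]
    have h2 : ∑ v ∈ C.Zt X n, ∑ S ∈ B, ((if v = (cross S).1 then (1:ℤ) else 0) -
        (if v = (cross S).2 then 1 else 0)) =
        if C.Zt X n ∈ B then 1 else 0 := by
      rw [Finset.sum_comm, ← hBsum n]
      apply Finset.sum_congr rfl
      intro S _
      rw [Finset.sum_sub_distrib, Finset.sum_ite_eq' (C.Zt X n) (cross S).1
        (fun _ => (1:ℤ)), Finset.sum_ite_eq' (C.Zt X n) (cross S).2 (fun _ => (1:ℤ))]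
    rw [h1, h2, NodalCurve.degSub]
    ring
  -- the numeric bounds on each tail
  set lam : C.N → ℤ := fun n =>
    C.degSub e'' (C.Zt X n) * (2 * g - 2) - (d + 1) * C.degω (C.Zt X n) with hlamdef
  have hbound : ∀ n : C.N, -(g - 1) ≤ lam n ∧ lam n ≤ g - 2 := by
    intro n
    obtain ⟨a, b, hab, ha, hb, hmem, hnmem⟩ := C.Zt_spec hconn hct X n
    set Z : Finset C.V := C.Zt X n with hZdef
    have hkZ : C.k Z = 1 := C.k_Zt hconn hct X n
    have hXZ : X ∉ Z := C.X_not_mem_Zt X n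
    have hZne : Z.Nonempty := ⟨b, hb⟩
    have hZnu : Z ≠ Finset.univ := fun h => hXZ (h ▸ Finset.mem_univ X)
    -- semistability of e at Z, in integral form
    have hss := hq.1 Z hZne hZnu
    rw [NodalCurve.semistableAt, hkZ] at hss
    have hcq : (0:ℚ) < 2 * (g:ℚ) - 2 := by exact_mod_cast hc2
    have hlamZ : |C.degSub e Z * (2 * g - 2) - d * C.degω Z| ≤ g - 1 := by
      have h2 : |(C.degSub e Z : ℚ) - ((d : ℚ) * (C.degω Z : ℚ)) / (2 * (g:ℚ) - 2)| ≤
          (1:ℚ) / 2 := by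
        rw [hddef, hgdef]
        push_cast
        simpa using hss
      have h3 := NodalCurve.qhelp3 hcq h2
      have h4 : (1:ℚ) * (2 * (g:ℚ) - 2) / 2 = ((g - 1 : ℤ) : ℚ) := by push_cast; ring
      rw [h4] at h3
      exact_mod_cast h3
    have habsZ := abs_le.mp hlamZ
    -- adjunction and degree bounds
    have hadjZ : C.degω Z = 2 * C.genusSub Z - 1 := by
      rw [C.degw_adjunction Z, hkZ]; push_cast; ring
    have hdlow : 1 ≤ C.degω Z := C.degw_pos hst hZne
    have hdhigh : C.degω Z ≤ 2 * g - 3 := by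
      have h1 := C.degw_compl Z
      have h2 : (Finset.univ \ Z).Nonempty := ⟨X, Finset.mem_sdiff.mpr ⟨Finset.mem_univ X, hXZ⟩⟩
      have h3 := C.degw_pos hst h2
      rw [← hgdef] at h1
      linarith
    have hlamval : lam n = C.degSub e Z * (2 * g - 2) - d * C.degω Z +
        (if Z ∈ B then 1 else 0) * (2 * g - 2) - C.degω Z := by
      rw [hlamdef]
      simp only
      rw [hdegZ n, ← hZdef]
      ring
    by_cases hZB : Z ∈ B
    · have hbig := ((hB Z).mp hZB).1.2
      rw [← hgdef, ← hddef] at hbig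
      rw [hlamval, if_pos hZB]
      constructor <;> linarith
    · have hnbig : ¬ C.isBigTail e Z := fun h => hZB ((hB Z).mpr ⟨h, hXZ⟩)
      have hnineq : ¬ (C.degSub e Z * (2 * C.genus - 2) - C.totalDeg e * C.degω Z
          < 2 * C.genusSub Z - C.genus) := fun h => hnbig ⟨hkZ, h⟩
      push_neg at hnineq
      rw [← hgdef, ← hddef] at hnineq
      rw [hlamval, if_neg hZB]
      constructor <;> linarith
  have habs : ∀ n : C.N, |lam n| ≤ g - 1 := by
    intro n
    rcases hbound n with ⟨h1, h2⟩
    rw [abs_le]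
    exact ⟨h1, by linarith⟩
  -- identity for arbitrary subcurves
  have hid : ∀ S : Finset C.V, C.degSub e'' S * (2 * g - 2) - (d + 1) * C.degω S =
      ∑ n, C.eps X S n * lam n := by
    intro S
    rw [← hlam S, C.key_identity hconn hct X hfun hsum0 S]
    exact Finset.sum_congr rfl fun n _ => by rw [hlam (C.Zt X n)]
  -- indicator sum equals k S
  have hksum : ∀ S : Finset C.V,
      ∑ n, (if C.endsIn S n = 1 then (1:ℤ) else 0) = (C.k S : ℤ) := by
    intro S
    rw [NodalCurve.k, Finset.sum_boole]
  constructor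
  · constructor
    · -- semistability of e''
      intro S hSne hSnu
      have hb1 : |C.degSub e'' S * (2 * g - 2) - (d + 1) * C.degω S| ≤
          (C.k S : ℤ) * (g - 1) := by
        rw [hid S, ← hksum S, Finset.sum_mul]
        refine (Finset.abs_sum_le_sum_abs _ _).trans (Finset.sum_le_sum ?_)
        intro n _
        rw [abs_mul]
        have h1 := C.eps_abs hconn hct X S n
        have h2 := habs n
        have h3 : (0:ℤ) ≤ if C.endsIn S n = 1 then 1 else 0 := by positivity
        calc |C.eps X S n| * |lam n| ≤ (if C.endsIn S n = 1 then (1:ℤ) else 0) * (g - 1) :=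
          mul_le_mul h1 h2 (abs_nonneg _) h3
        _ = _ := rfl
      rw [NodalCurve.semistableAt, htot, ← hgdef]
      apply NodalCurve.qhelp1 (show (0:ℚ) < 2 * (g:ℚ) - 2 by exact_mod_cast hc2)
      have : ((C.k S : ℚ)) * (2 * (g:ℚ) - 2) / 2 = (((C.k S : ℤ) * (g - 1) : ℤ) : ℚ) := by
        push_cast; ring
      rw [this]
      push_cast
      exact_mod_cast hb1
    · -- the strict lower inequality at subcurves containing X
      intro S hSne hSnu hXS
      obtain ⟨y, hy⟩ : ∃ y, y ∉ S := by
        by_contra hcon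
        push_neg at hcon
        exact hSnu (Finset.eq_univ_iff_forall.mpr hcon)
      have hF := C.F_eq hconn hct X S y
      rw [if_neg hy, if_pos hXS] at hF
      obtain ⟨n0, hn0⟩ : ∃ n0 : C.N,
          C.eps X S n0 * (if y ∈ C.Zt X n0 then (1:ℤ) else 0) < 0 := by
        by_contra hall
        push_neg at hall
        have := Finset.sum_nonneg (fun n (_ : n ∈ Finset.univ) => hall n)
        rw [hF] at this
        linarith
      have heps0 : C.eps X S n0 < 0 := by
        by_contra hcon
        push_neg at hcon
        have h3 : (0:ℤ) ≤ if y ∈ C.Zt X n0 then (1:ℤ) else 0 := by positivity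
        nlinarith
      have hend0 : C.endsIn S n0 = 1 ∧ C.eps X S n0 = -1 := by
        have h1 := C.eps_abs hconn hct X S n0
        by_cases h2 : C.endsIn S n0 = 1
        · rw [if_pos h2] at h1
          rw [abs_le] at h1
          exact ⟨h2, by omega⟩
        · rw [if_neg h2] at h1
          have h5 : C.eps X S n0 = 0 :=
            abs_eq_zero.mp (le_antisymm h1 (abs_nonneg _))
          exact absurd h5 (by omega)
      -- strict bound
      have hstrict : -((C.k S : ℤ) * (g - 1)) <
          C.degSub e'' S * (2 * g - 2) - (d + 1) * C.degω S := by
        rw [hid S]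
        have hkey : 0 < ∑ n, (C.eps X S n * lam n +
            (if C.endsIn S n = 1 then (1:ℤ) else 0) * (g - 1)) := by
          refine Finset.sum_pos' ?_ ⟨n0, Finset.mem_univ n0, ?_⟩
          · intro n _
            have h1 := C.eps_abs hconn hct X S n
            have h2 := habs n
            by_cases h3 : C.endsIn S n = 1
            · rw [if_pos h3] at h1 ⊢
              rw [abs_le] at h1 h2
              nlinarith [h1.1, h1.2, h2.1, h2.2]
            · rw [if_neg h3] at h1 ⊢
              have h5 : C.eps X S n = 0 :=
                abs_eq_zero.mp (le_antisymm h1 (abs_nonneg _))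
              rw [h5]
              simp
          · rw [hend0.2, if_pos hend0.1]
            have := (hbound n0).2
            linarith
        rw [Finset.sum_add_distrib, ← Finset.sum_mul, hksum S] at hkey
        linarith
      rw [NodalCurve.quasistableLowAt, htot, ← hgdef]
      apply NodalCurve.qhelp2 (show (0:ℚ) < 2 * (g:ℚ) - 2 by exact_mod_cast hc2)
      have : ((C.k S : ℚ)) * (2 * (g:ℚ) - 2) / 2 = (((C.k S : ℤ) * (g - 1) : ℤ) : ℚ) := by
        push_cast; ring
      rw [this]
      exact_mod_cast hstrict
  · exact htot
end
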